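/- The asymptotic dimension of the coarse space (ω, F) equals 1. -/
import Mathlib


open Set Pointwise Filter Topology

/-- Ball of radius `E` around `x`. -/
def cball {X : Type*} (E : Set (X × X)) (x : X) : Set X := {y | (x, y) ∈ E}

/-- Ball of radius `E` around a set `A`. -/
def cballSet {X : Type*} (E : Set (X × X)) (A : Set X) : Set X := ⋃ a ∈ A, cball E a

/-- The condition on `φ : ω → [ω]^{<ω}` defining the family `Φ`. -/
def IsPhi (φ : ℕ → Finset ℕ) : Prop := (∀ n, n ∈ φ n) ∧ ∀ n, {m | n ∈ φ m}.Finite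

/-- The coarse structure `F` on `ω`. -/
def Ffam : Set (Set (ℕ × ℕ)) :=
  {E | ∃ φ : ℕ → Finset ℕ, IsPhi φ ∧ E ⊆ {p : ℕ × ℕ | p.2 ∈ φ p.1}}

/-- A family of sets is `H`-bounded. -/
def IsBoundedFam {X : Type*} (H : Set (X × X)) (M : Set (Set X)) : Prop :=
  ∀ A ∈ M, ∃ x, A ⊆ cball H x

/-- A family of sets is `E`-disjoint. -/
def IsDisjFam {X : Type*} (E : Set (X × X)) (M : Set (Set X)) : Prop :=
  ∀ A ∈ M, ∀ B ∈ M, A ≠ B → cballSet E A ∩ B = ∅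

/-- `asdim (X, C) ≤ n`. -/
def AsdimLE {X : Type*} (C : Set (Set (X × X))) (n : ℕ) : Prop :=
  ∀ E ∈ C, ∃ H ∈ C, ∃ M : Fin (n + 1) → Set (Set X),
    ⋃₀ (⋃ i, M i) = univ ∧ (∀ i, IsBoundedFam H (M i)) ∧ ∀ i, IsDisjFam E (M i)


noncomputable def gfun (φ : ℕ → Finset ℕ) (hfin : ∀ n, {m | n ∈ φ m}.Finite) (t : ℕ) : ℕ :=
  max (t + 1) (max ((Finset.range t).sup (fun a => (φ a).sup id) + 1)
    ((Finset.range t).sup (fun b => (hfin b).toFinset.sup id) + 1))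

noncomputable def nfun (φ : ℕ → Finset ℕ) (hfin : ∀ n, {m | n ∈ φ m}.Finite) : ℕ → ℕ
  | 0 => 0
  | i + 1 => gfun φ hfin (nfun φ hfin i)

lemma nfun_succ (φ : ℕ → Finset ℕ) (hfin : ∀ n, {m | n ∈ φ m}.Finite) (i : ℕ) :
    nfun φ hfin (i + 1) = gfun φ hfin (nfun φ hfin i) := rfl

lemma gfun_gt (φ : ℕ → Finset ℕ) (hfin : ∀ n, {m | n ∈ φ m}.Finite) (t : ℕ) :
    t < gfun φ hfin t := lt_of_lt_of_le (Nat.lt_succ_self t) (le_max_left _ _)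

lemma nfun_strictMono (φ : ℕ → Finset ℕ) (hfin : ∀ n, {m | n ∈ φ m}.Finite) :
    StrictMono (nfun φ hfin) :=
  strictMono_nat_of_lt_succ (fun i => by rw [nfun_succ]; exact gfun_gt _ _ _)

lemma le_nfun (φ : ℕ → Finset ℕ) (hfin : ∀ n, {m | n ∈ φ m}.Finite) (i : ℕ) :
    i ≤ nfun φ hfin i := by
  induction i with
  | zero => simp [nfun]
  | succ k ih =>
    have := gfun_gt φ hfin (nfun φ hfin k)
    rw [nfun_succ]; omega

lemma nfun_up (φ : ℕ → Finset ℕ) (hfin : ∀ n, {m | n ∈ φ m}.Finite) {a b i : ℕ}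
    (ha : a < nfun φ hfin i) (hb : b ∈ φ a) : b < nfun φ hfin (i + 1) := by
  have h1 : b ≤ (Finset.range (nfun φ hfin i)).sup (fun a => (φ a).sup id) :=
    le_trans (Finset.le_sup (f := id) hb) (Finset.le_sup (f := fun a => (φ a).sup id) (Finset.mem_range.mpr ha))
  have h2 : (Finset.range (nfun φ hfin i)).sup (fun a => (φ a).sup id) + 1
      ≤ gfun φ hfin (nfun φ hfin i) := le_trans (le_max_left _ _) (le_max_right _ _)
  rw [nfun_succ]; omega

lemma nfun_down (φ : ℕ → Finset ℕ) (hfin : ∀ n, {m | n ∈ φ m}.Finite) {b m i : ℕ}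
    (hb : b < nfun φ hfin i) (hm : b ∈ φ m) : m < nfun φ hfin (i + 1) := by
  have hmem : m ∈ (hfin b).toFinset := (Set.Finite.mem_toFinset _).mpr hm
  have h1 : m ≤ (Finset.range (nfun φ hfin i)).sup (fun b => (hfin b).toFinset.sup id) :=
    le_trans (Finset.le_sup (f := id) hmem) (Finset.le_sup (f := fun b => (hfin b).toFinset.sup id) (Finset.mem_range.mpr hb))
  have h2 : (Finset.range (nfun φ hfin i)).sup (fun b => (hfin b).toFinset.sup id) + 1
      ≤ gfun φ hfin (nfun φ hfin i) := le_trans (le_max_right _ _) (le_max_right _ _)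
  rw [nfun_succ]; omega

/-- `asdim (ω, F) = 1`. -/
theorem asdim_Ffam_eq_one : AsdimLE Ffam 1 ∧ ¬ AsdimLE Ffam 0 := by
  constructor
  · -- upper bound
    intro E hE
    obtain ⟨φ, hφ, hEφ⟩ := hE
    set hfin := hφ.2 with hfin_def
    set n : ℕ → ℕ := nfun φ hfin with hn
    set g : ℕ → ℕ := gfun φ hfin with hg
    have hmono : StrictMono n := nfun_strictMono φ hfin
    -- the bounding entourage H
    set ψ : ℕ → Finset ℕ := fun m => Finset.Ico m (g m) with hψdef
    refine ⟨{p : ℕ × ℕ | p.2 ∈ ψ p.1}, ⟨ψ, ⟨?_, ?_⟩, subset_rfl⟩, ?_⟩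
    · intro m
      simp only [hψdef, Finset.mem_Ico]
      exact ⟨le_refl m, gfun_gt φ hfin m⟩
    · intro b
      apply Set.Finite.subset (Set.finite_Iic b)
      intro m hm
      simp only [hψdef, Set.mem_setOf_eq, Finset.mem_Ico] at hm
      exact hm.1
    · -- the two families
      refine ⟨fun k => {A | ∃ i, i % 2 = (k : ℕ) ∧ A = Set.Ico (n i) (n (i + 1))}, ?_, ?_, ?_⟩
      · -- cover
        apply Set.eq_univ_of_forall
        intro m
        have hex : ∀ m : ℕ, ∃ i, n i ≤ m ∧ m < n (i + 1) := by
          intro m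
          induction m with
          | zero =>
            refine ⟨0, le_of_eq (by simp [hn, nfun]), ?_⟩
            have h01 : n 0 < n (0 + 1) := hmono (lt_add_one 0)
            have h00 : n 0 = 0 := by simp [hn, nfun]
            omega
          | succ k ih =>
            obtain ⟨i, h1, h2⟩ := ih
            by_cases hc : k + 1 < n (i + 1)
            · exact ⟨i, by omega, hc⟩
            · refine ⟨i + 1, by omega, ?_⟩
              have hstep : n (i + 1) < n (i + 1 + 1) := hmono (lt_add_one (i + 1))
              omega
        obtain ⟨i, hP, hP2⟩ := hex m
        rw [Set.mem_sUnion]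
        refine ⟨Set.Ico (n i) (n (i + 1)), ?_, hP, hP2⟩
        rw [Set.mem_iUnion]
        exact ⟨⟨i % 2, by omega⟩, ⟨i, rfl, rfl⟩⟩
      · -- boundedness
        intro k A hA
        obtain ⟨i, _, rfl⟩ := hA
        refine ⟨n i, ?_⟩
        intro y hy
        show y ∈ ψ (n i)
        simp only [hψdef, Finset.mem_Ico]
        rw [hn, nfun_succ] at hy
        exact ⟨hy.1, hy.2⟩
      · -- disjointness
        intro k A hA B hB hne
        obtain ⟨i, hik, rfl⟩ := hA
        obtain ⟨j, hjk, rfl⟩ := hB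
        have hij : i ≠ j := by rintro rfl; exact hne rfl
        have hsep : i + 2 ≤ j ∨ j + 2 ≤ i := by omega
        rw [Set.eq_empty_iff_forall_notMem]
        rintro x ⟨hx1, hx2⟩
        simp only [cballSet, cball, Set.mem_iUnion] at hx1
        obtain ⟨a, ha, hax⟩ := hx1
        have hxφ : x ∈ φ a := hEφ hax
        simp only [Set.mem_Ico] at ha hx2
        rcases hsep with hsep | hsep
        · -- j ≥ i + 2 : x < n (i+2) ≤ n j ≤ x
          have h1 : x < n (i + 2) := nfun_up φ hfin ha.2 hxφ
          have h2 : n (i + 2) ≤ n j := hmono.le_iff_le.mpr hsep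
          omega
        · -- i ≥ j + 2
          obtain ⟨d, rfl⟩ : ∃ d, i = j + 2 + d := ⟨i - (j + 2), by omega⟩
          have h1 : x < n (j + 1 + d) := lt_of_lt_of_le hx2.2 (hmono.le_iff_le.mpr (by omega))
          have h2 : a < n (j + 1 + d + 1) := nfun_down φ hfin h1 hxφ
          have h3 : n (j + 2 + d) ≤ a := ha.1
          have h4 : (j + 1 + d + 1) = j + 2 + d := by omega
          rw [h4] at h2
          omega
  · -- lower bound
    intro h
    set φ : ℕ → Finset ℕ := fun m => {m, m + 1} with hφdef
    have hφ : IsPhi φ := by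
      constructor
      · intro m; simp [hφdef]
      · intro b
        apply Set.Finite.subset (Set.finite_Iic b)
        intro m hm
        simp only [hφdef, Set.mem_setOf_eq, Finset.mem_insert, Finset.mem_singleton] at hm
        simp only [Set.mem_Iic]
        omega
    obtain ⟨H, hH, M, hcov, hbdd, hdisj⟩ :=
      h {p : ℕ × ℕ | p.2 ∈ φ p.1} ⟨φ, hφ, subset_rfl⟩
    obtain ⟨ψ, _, hHψ⟩ := hH
    have h0 : (0 : ℕ) ∈ ⋃₀ (⋃ i, M i) := hcov ▸ Set.mem_univ 0
    rw [Set.mem_sUnion] at h0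
    obtain ⟨A, hAmem, h0A⟩ := h0
    rw [Set.mem_iUnion] at hAmem
    obtain ⟨i, hA⟩ := hAmem
    have hsucc : ∀ m, m ∈ A → m + 1 ∈ A := by
      intro m hm
      have hm1 : (m + 1 : ℕ) ∈ ⋃₀ (⋃ i, M i) := hcov ▸ Set.mem_univ _
      rw [Set.mem_sUnion] at hm1
      obtain ⟨B, hBmem, hmB⟩ := hm1
      rw [Set.mem_iUnion] at hBmem
      obtain ⟨j, hB⟩ := hBmem
      have hji : j = i := Subsingleton.elim (α := Fin 1) j i
      subst hji
      by_cases hAB : A = B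
      · rw [hAB]; exact hmB
      · exfalso
        have hd := hdisj j A hA B hB hAB
        rw [Set.eq_empty_iff_forall_notMem] at hd
        apply hd (m + 1)
        refine ⟨?_, hmB⟩
        simp only [cballSet, cball, Set.mem_iUnion]
        exact ⟨m, hm, by simp [hφdef]⟩
    have hall : ∀ m, m ∈ A := by
      intro m
      induction m with
      | zero => exact h0A
      | succ k ih => exact hsucc k ih
    obtain ⟨x, hAx⟩ := hbdd i A hA
    have hbig : ((ψ x).sup id + 1) ∈ ψ x := hHψ (hAx (hall _))
    have := Finset.le_sup (f := id) hbig
    simp only [id] at this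
    omega
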